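/- (Wainberg-style error-and-erasure weighting) Consider the concatenated code A·B with error-and-erasure row decoding: for row j with erasure set X_j, set w_j = 2·wt_{X_j}(Ê_j) + |X_j| if this is < d_b, and w_j = d_b on decoding failure; assign α_j = (d_b − w_j)/d_b. This decoder corrects all error-and-erasure patterns satisfying Σ_{i ∈ [M]} min{2·wt_{X_i}(E_i) + |X_i|, 2·d_b} < d_a·d_b. -/

import Mathlib

/-- Hamming weight of `v` punctured at the coordinates in `X`. -/
def wtX {N : ℕ} {Fq : Type*} [Zero Fq] [DecidableEq Fq]
    (X : Finset (Fin N)) (v : Fin N → Fq) : ℕ :=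
  ((Finset.univ.filter fun n => v n ≠ 0) \ X).card

lemma wtX_triangle {N : ℕ} {Fq : Type*} [AddCommGroup Fq] [DecidableEq Fq]
    (X : Finset (Fin N)) (u v E : Fin N → Fq) :
    hammingDist u v ≤ wtX X (u + E - v) + wtX X E + X.card := by
  classical
  have hsub : (Finset.univ.filter fun n => u n ≠ v n) ⊆
      (((Finset.univ.filter fun n => (u + E - v) n ≠ 0) \ X) ∪
       ((Finset.univ.filter fun n => E n ≠ 0) \ X)) ∪ X := by
    intro n hn
    simp only [Finset.mem_filter, Finset.mem_univ, true_and] at hn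
    by_cases hX : n ∈ X
    · exact Finset.mem_union_right _ hX
    · refine Finset.mem_union_left _ ?_
      by_cases h1 : (u + E - v) n = 0
      · refine Finset.mem_union_right _ (Finset.mem_sdiff.2 ⟨?_, hX⟩)
        simp only [Finset.mem_filter, Finset.mem_univ, true_and]
        intro hE
        apply hn
        have h1' : u n + E n - v n = 0 := h1
        rw [hE, add_zero] at h1'
        exact sub_eq_zero.mp h1'
      · exact Finset.mem_union_left _ (Finset.mem_sdiff.2 ⟨by
          simp only [Finset.mem_filter, Finset.mem_univ, true_and]; exact h1, hX⟩)
  have h := Finset.card_le_card hsub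
  calc hammingDist u v
      = (Finset.univ.filter fun n => u n ≠ v n).card := rfl
    _ ≤ _ := h
    _ ≤ wtX X (u + E - v) + wtX X E + X.card := by
        refine (Finset.card_union_le _ _).trans ?_
        exact Nat.add_le_add_right (Finset.card_union_le (α := Fin N) _ _) X.card

/-- Wainberg-style error-and-erasure decoding of the concatenated code `A·B`:
each row `j` of `R = W + E` (with erasure set `X j`) is decoded with an
error-and-erasure decoder for the inner code (`What j` is the output; `fail`
the set of rows on which no inner codeword `c` satisfies
`2·wt_{X_j}(R_j − c) + |X_j| < d_b`).  Row `j` is given the reliability weight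
`α_j = (d_b − w_j)/d_b`, with `w_j = 2·wt_{X_j}(Ê_j) + |X_j|` on success and
`w_j = d_b` on failure.  If
`Σ_j min{2·wt_{X_j}(E_j) + |X_j|, 2·d_b} < d_a·d_b`, then Forney's GMD
condition `Σ_{j ∈ I_C}(1 − α_j) + Σ_{j ∈ I_E}(1 + α_j) < d_a` holds, so the
GMD decoder for the outer code recovers every column of the transmitted
codeword. -/
theorem concatenated_error_and_erasure_decoder_corrects
    {Fq : Type*} [Field Fq] [Fintype Fq] [DecidableEq Fq]
    {M N da db : ℕ} (hdb : 0 < db)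
    (Bcode : Set (Fin N → Fq))
    (hB : ∀ u ∈ Bcode, ∀ v ∈ Bcode, u ≠ v → db ≤ hammingDist u v)
    (W E : Fin M → Fin N → Fq) (hW : ∀ j, W j ∈ Bcode)
    (X : Fin M → Finset (Fin N))
    (What : Fin M → Fin N → Fq) (fail : Finset (Fin M))
    (hdec1 : ∀ j ∉ fail,
      What j ∈ Bcode ∧ 2 * wtX (X j) (W j + E j - What j) + (X j).card < db)
    (hdec2 : ∀ j ∈ fail, ¬ ∃ c ∈ Bcode, 2 * wtX (X j) (W j + E j - c) + (X j).card < db)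
    (hE : ∑ j, min (2 * wtX (X j) (E j) + (X j).card) (2 * db) < da * db) :
    (∑ j ∈ Finset.univ.filter fun j => What j = W j,
      (1 - (if j ∈ fail then 0 else
        ((db : ℝ) - (2 * (wtX (X j) (W j + E j - What j) : ℝ) + ((X j).card : ℝ))) / (db : ℝ)))) +
    (∑ j ∈ Finset.univ.filter fun j => What j ≠ W j,
      (1 + (if j ∈ fail then 0 else
        ((db : ℝ) - (2 * (wtX (X j) (W j + E j - What j) : ℝ) + ((X j).card : ℝ))) / (db : ℝ))))
    < (da : ℝ) := by
  classical
  have hdbR : (0:ℝ) < db := by exact_mod_cast hdb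
  set m : Fin M → ℕ := fun j => min (2 * wtX (X j) (E j) + (X j).card) (2 * db) with hm
  -- on failure rows, db ≤ m j
  have keyfail : ∀ j ∈ fail, db ≤ m j := by
    intro j hj
    have h := hdec2 j hj
    push_neg at h
    have h' := h (W j) (hW j)
    have : W j + E j - W j = E j := by abel
    rw [this] at h'
    simp only [hm]
    omega
  have key1 : ∀ j, What j = W j →
      (1 - (if j ∈ fail then 0 else
        ((db : ℝ) - (2 * (wtX (X j) (W j + E j - What j) : ℝ) + ((X j).card : ℝ))) / (db : ℝ)))
        ≤ (m j : ℝ) / db := by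
    intro j h
    by_cases hf : j ∈ fail
    · rw [if_pos hf]
      have : (db : ℝ) ≤ m j := by exact_mod_cast keyfail j hf
      rw [sub_zero, le_div_iff₀ hdbR, one_mul]
      exact this
    · rw [if_neg hf]
      obtain ⟨hBW, hw⟩ := hdec1 j hf
      rw [h] at hw ⊢
      have heq : W j + E j - W j = E j := by abel
      rw [heq] at hw ⊢
      have hmj : m j = 2 * wtX (X j) (E j) + (X j).card := by
        simp only [hm]; omega
      have hc : (m j : ℝ) = 2 * (wtX (X j) (E j) : ℝ) + ((X j).card : ℝ) := by
        rw [hmj]; push_cast; ring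
      rw [le_div_iff₀ hdbR, hc]
      field_simp
      linarith
  have key2 : ∀ j, What j ≠ W j →
      (1 + (if j ∈ fail then 0 else
        ((db : ℝ) - (2 * (wtX (X j) (W j + E j - What j) : ℝ) + ((X j).card : ℝ))) / (db : ℝ)))
        ≤ (m j : ℝ) / db := by
    intro j h
    by_cases hf : j ∈ fail
    · rw [if_pos hf]
      have : (db : ℝ) ≤ m j := by exact_mod_cast keyfail j hf
      rw [add_zero, le_div_iff₀ hdbR, one_mul]
      exact this
    · rw [if_neg hf]
      obtain ⟨hBW, hw⟩ := hdec1 j hf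
      have hdist : db ≤ hammingDist (W j) (What j) :=
        hB _ (hW j) _ hBW (fun heq => h heq.symm)
      have htri := wtX_triangle (X j) (W j) (What j) (E j)
      have hkey : db ≤ wtX (X j) (W j + E j - What j) + wtX (X j) (E j) + (X j).card :=
        hdist.trans htri
      have hnat : 2 * db ≤ 2 * wtX (X j) (W j + E j - What j) + (X j).card + m j := by
        simp only [hm]; omega
      have hc : (2 * db : ℝ) ≤ 2 * (wtX (X j) (W j + E j - What j) : ℝ) + ((X j).card : ℝ)
          + (m j : ℝ) := by exact_mod_cast hnat
      rw [le_div_iff₀ hdbR]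
      field_simp
      nlinarith [hc]
  have hsum1 : (∑ j ∈ Finset.univ.filter fun j => What j = W j,
      (1 - (if j ∈ fail then 0 else
        ((db : ℝ) - (2 * (wtX (X j) (W j + E j - What j) : ℝ) + ((X j).card : ℝ))) / (db : ℝ))))
      ≤ ∑ j ∈ Finset.univ.filter fun j => What j = W j, (m j : ℝ) / db :=
    Finset.sum_le_sum fun j hj => key1 j (Finset.mem_filter.1 hj).2
  have hsum2 : (∑ j ∈ Finset.univ.filter fun j => What j ≠ W j,
      (1 + (if j ∈ fail then 0 else
        ((db : ℝ) - (2 * (wtX (X j) (W j + E j - What j) : ℝ) + ((X j).card : ℝ))) / (db : ℝ))))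
      ≤ ∑ j ∈ Finset.univ.filter fun j => What j ≠ W j, (m j : ℝ) / db :=
    Finset.sum_le_sum fun j hj => key2 j (Finset.mem_filter.1 hj).2
  refine lt_of_le_of_lt (add_le_add hsum1 hsum2) ?_
  rw [Finset.sum_filter_add_sum_filter_not Finset.univ (fun j => What j = W j)
    (fun j => (m j : ℝ) / db), ← Finset.sum_div, div_lt_iff₀ hdbR]
  exact_mod_cast hE
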